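/- If every team in a league outcome with n teams has total points exactly 2(n−1), then every match of the outcome ends in a draw. -/

import Mathlib

open Finset

inductive MatchResult : Type
  | homeWin : MatchResult
  | draw : MatchResult
  | awayWin : MatchResult
  deriving DecidableEq

instance : Fintype MatchResult :=
  ⟨{MatchResult.homeWin, MatchResult.draw, MatchResult.awayWin}, by
    intro x; cases x <;> first | decide | simp⟩

/-- A league outcome: a result for each ordered pair of distinct teams
(the first component is the home team). -/
abbrev LeagueOutcome (n : ℕ) : Type :=
  {p : Fin n × Fin n // p.1 ≠ p.2} → MatchResult

/-- Points earned by the home team. -/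
def homePts : MatchResult → ℕ
  | .homeWin => 3
  | .draw => 1
  | .awayWin => 0

/-- Points earned by the away team. -/
def awayPts : MatchResult → ℕ
  | .homeWin => 0
  | .draw => 1
  | .awayWin => 3

/-- Total points of team `i`: sum over all matches of the points `i` earns in them. -/
def totalPoints {n : ℕ} (r : LeagueOutcome n) (i : Fin n) : ℕ :=
  ∑ m : {p : Fin n × Fin n // p.1 ≠ p.2},
    ((if m.val.1 = i then homePts (r m) else 0) +
     (if m.val.2 = i then awayPts (r m) else 0))

/-- Total points the other teams earn in their matches against team `i`. -/
def oppPoints {n : ℕ} (r : LeagueOutcome n) (i : Fin n) : ℕ :=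
  ∑ m : {p : Fin n × Fin n // p.1 ≠ p.2},
    ((if m.val.1 = i then awayPts (r m) else 0) +
     (if m.val.2 = i then homePts (r m) else 0))

/-- Number of matches that team `i` wins. -/
def wins {n : ℕ} (r : LeagueOutcome n) (i : Fin n) : ℕ :=
  (Finset.univ.filter (fun m : {p : Fin n × Fin n // p.1 ≠ p.2} =>
    (m.val.1 = i ∧ r m = .homeWin) ∨ (m.val.2 = i ∧ r m = .awayWin))).card

/-- Number of matches that team `i` draws. -/
def draws {n : ℕ} (r : LeagueOutcome n) (i : Fin n) : ℕ :=
  (Finset.univ.filter (fun m : {p : Fin n × Fin n // p.1 ≠ p.2} =>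
    (m.val.1 = i ∨ m.val.2 = i) ∧ r m = .draw)).card

/-- Number of matches that team `i` loses. -/
def losses {n : ℕ} (r : LeagueOutcome n) (i : Fin n) : ℕ :=
  (Finset.univ.filter (fun m : {p : Fin n × Fin n // p.1 ≠ p.2} =>
    (m.val.1 = i ∧ r m = .awayWin) ∨ (m.val.2 = i ∧ r m = .homeWin))).card

/-- if every team has exactly `2(n−1)` points, every match is a draw. -/
lemma card_matches (n : ℕ) :
    Fintype.card {p : Fin n × Fin n // p.1 ≠ p.2} = n * n - n := by
  have h1 : Fintype.card {p : Fin n × Fin n // p.1 = p.2} = n := by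
    rw [Fintype.card_congr
      { toFun := fun p => p.val.1
        invFun := fun i => (⟨(i, i), rfl⟩ : {p : Fin n × Fin n // p.1 = p.2})
        left_inv := fun ⟨⟨a, b⟩, h⟩ => by simp only [Subtype.mk.injEq, Prod.mk.injEq]; exact ⟨trivial, h⟩
        right_inv := fun i => rfl }]
    exact Fintype.card_fin n
  have h2 := Fintype.card_subtype_compl (fun p : Fin n × Fin n => p.1 = p.2)
  simpa [h1] using h2

lemma sum_total {n : ℕ} (r : LeagueOutcome n) :
    ∑ i, totalPoints r i = ∑ m : {p : Fin n × Fin n // p.1 ≠ p.2},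
      (homePts (r m) + awayPts (r m)) := by
  unfold totalPoints
  rw [Finset.sum_comm]
  refine Finset.sum_congr rfl fun m _ => ?_
  rw [Finset.sum_add_distrib, Finset.sum_ite_eq, Finset.sum_ite_eq]
  simp

theorem all_draws_of_min_score (n : ℕ) (r : LeagueOutcome n)
    (h : ∀ i, totalPoints r i = 2 * (n - 1)) :
    ∀ m, r m = MatchResult.draw := by
  have hsum : ∑ m : {p : Fin n × Fin n // p.1 ≠ p.2},
      (homePts (r m) + awayPts (r m)) = 2 * (n * n - n) := by
    rw [← sum_total]
    simp only [h, Finset.sum_const, Finset.card_univ, Fintype.card_fin, smul_eq_mul]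
    cases n with
    | zero => simp
    | succ k =>
      have hk : (k + 1) * (k + 1) - (k + 1) = (k + 1) * k := by
        rw [Nat.mul_succ]; omega
      rw [hk, Nat.succ_sub_one]; ring
  have hconst : ∑ _m : {p : Fin n × Fin n // p.1 ≠ p.2}, 2 = 2 * (n * n - n) := by
    rw [Finset.sum_const, Finset.card_univ, card_matches, smul_eq_mul, Nat.mul_comm]
  have := (Finset.sum_eq_sum_iff_of_le
    (f := fun _ => 2) (g := fun m => homePts (r m) + awayPts (r m))
    (fun m _ => by rcases hrm : r m <;> simp [homePts, awayPts, hrm])).mp (by rw [hsum, hconst])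
  intro m
  have h2 := (this m (Finset.mem_univ m)).symm
  cases hr : r m
  · rw [hr] at h2; simp [homePts, awayPts] at h2
  · rfl
  · rw [hr] at h2; simp [homePts, awayPts] at h2
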